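/- Let $E$ be an exchange matrix with weights $f_i > 0$. Two distinct vertices $i, j$ satisfy $e_{ik}/f_i = e_{jk}/f_j$ for all $k$ if and only if $u_{i\alpha}/\sqrt{f_i} = u_{j\alpha}/\sqrt{f_j}$ for every eigenvector $u_\alpha$ of the normalized exchange matrix $\Pi^{-1/2} E \Pi^{-1/2}$ whose eigenvalue $\lambda_\alpha$ is nonzero. -/

import Mathlib

open BigOperators Matrix
open scoped RealInnerProductSpace

/-- Two distinct vertices are equivalent iff their raw coordinates coincide in
every eigendimension of the normalized exchange matrix with nonzero eigenvalue. -/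
theorem equivalent_iff_raw_coordinates {n : ℕ}
    (E : Matrix (Fin n) (Fin n) ℝ) (hsym : E.IsSymm)
    (hnn : ∀ i j, 0 ≤ E i j) (hsum : ∑ i, ∑ j, E i j = 1)
    (f : Fin n → ℝ) (hf : ∀ i, f i = ∑ j, E i j) (hfpos : ∀ i, 0 < f i)
    (S : Matrix (Fin n) (Fin n) ℝ)
    (hS : S = Matrix.of fun i j => E i j / (Real.sqrt (f i) * Real.sqrt (f j)))
    (i j : Fin n) (hij : i ≠ j) :
    (∀ k, E i k / f i = E j k / f j) ↔
    (∀ (μ : ℝ) (u : Fin n → ℝ), μ ≠ 0 → S.mulVec u = μ • u →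
      u i / Real.sqrt (f i) = u j / Real.sqrt (f j)) := by
  have hsq : ∀ k, 0 < Real.sqrt (f k) := fun k => Real.sqrt_pos.mpr (hfpos k)
  have hsqsq : ∀ k, Real.sqrt (f k) * Real.sqrt (f k) = f k := fun k =>
    Real.mul_self_sqrt (hfpos k).le
  have hEsym : ∀ a b, E a b = E b a := fun a b => (congrFun (congrFun hsym a) b).symm
  constructor
  · -- forward
    intro h μ u hμ hu
    have key : ∀ a : Fin n, μ * (u a / Real.sqrt (f a)) =
        ∑ k, (E a k / f a) * (u k / Real.sqrt (f k)) := by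
      intro a
      have ha := congrFun hu a
      simp only [Matrix.mulVec, dotProduct, Pi.smul_apply, smul_eq_mul, hS,
        Matrix.of_apply] at ha
      have : (∑ k, E a k / (Real.sqrt (f a) * Real.sqrt (f k)) * u k) / Real.sqrt (f a)
          = ∑ k, (E a k / f a) * (u k / Real.sqrt (f k)) := by
        rw [Finset.sum_div]
        refine Finset.sum_congr rfl fun k _ => ?_
        rw [← hsqsq a]
        field_simp
        rw [Real.sqrt_sq (hsq a).le]
      rw [← this, ha, mul_div_assoc]
    have hi := key i
    have hj := key j
    have : μ * (u i / Real.sqrt (f i)) = μ * (u j / Real.sqrt (f j)) := by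
      rw [hi, hj]
      exact Finset.sum_congr rfl fun k _ => by rw [h k]
    exact mul_left_cancel₀ hμ this
  · -- backward
    intro h k
    have hHerm : S.IsHermitian := by
      rw [Matrix.IsHermitian]
      ext a b
      simp [hS, Matrix.conjTranspose_apply, hEsym a b, mul_comm]
    set B := hHerm.eigenvectorBasis with hB
    -- the test vector
    set w : EuclideanSpace ℝ (Fin n) := WithLp.toLp 2 fun l =>
      (if l = i then 1 / Real.sqrt (f i) else 0) - (if l = j then 1 / Real.sqrt (f j) else 0)
      with hw
    have hinner : ∀ v : EuclideanSpace ℝ (Fin n),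
        (inner ℝ v w : ℝ) = v i / Real.sqrt (f i) - v j / Real.sqrt (f j) := by
      intro v
      rw [PiLp.inner_apply]
      simp only [hw, RCLike.inner_apply, starRingEnd_apply, star_trivial]
      rw [show (∑ l, ((if l = i then 1 / Real.sqrt (f i) else 0) -
          (if l = j then 1 / Real.sqrt (f j) else 0)) * v l) =
          ∑ l, ((if l = i then v l / Real.sqrt (f i) else 0) -
          (if l = j then v l / Real.sqrt (f j) else 0)) from
        Finset.sum_congr rfl fun l _ => by split_ifs <;> ring]
      rw [Finset.sum_sub_distrib, Finset.sum_ite_eq' Finset.univ i,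
        Finset.sum_ite_eq' Finset.univ j]
      simp
    -- each eigencomponent of w with nonzero eigenvalue vanishes
    have hcoef : ∀ α : Fin n,
        hHerm.eigenvalues α * (B α i / Real.sqrt (f i) - B α j / Real.sqrt (f j)) = 0 := by
      intro α
      by_cases hz : hHerm.eigenvalues α = 0
      · rw [hz, zero_mul]
      · have := h (hHerm.eigenvalues α) (B α) hz (hHerm.mulVec_eigenvectorBasis α)
        rw [sub_eq_zero.mpr this, mul_zero]
    -- S *ᵥ w = 0
    have hSw : S.mulVec w = 0 := by
      set V : Matrix (Fin n) (Fin n) ℝ := (hHerm.eigenvectorUnitary : Matrix (Fin n) (Fin n) ℝ)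
        with hV
      have hmid : (Matrix.diagonal (RCLike.ofReal ∘ hHerm.eigenvalues)).mulVec
          ((star V).mulVec (w : Fin n → ℝ)) = 0 := by
        funext α
        rw [Matrix.mulVec_diagonal]
        have hVw : ((star V).mulVec (w : Fin n → ℝ)) α
            = B α i / Real.sqrt (f i) - B α j / Real.sqrt (f j) := by
          simp only [Matrix.mulVec, dotProduct, Matrix.star_apply, star_trivial, hV,
            Matrix.IsHermitian.eigenvectorUnitary_apply, hw]
          have hBa : ∀ l, (hHerm.eigenvectorBasis α).ofLp l
              = B α l := fun l => rfl
          simp only [hBa]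
          rw [show (∑ l, (B α : EuclideanSpace ℝ (Fin n)) l *
              ((if l = i then 1 / Real.sqrt (f i) else 0) -
              (if l = j then 1 / Real.sqrt (f j) else 0))) =
              ∑ l, ((if l = i then B α l / Real.sqrt (f i) else 0) -
              (if l = j then B α l / Real.sqrt (f j) else 0)) from
            Finset.sum_congr rfl fun l _ => by split_ifs <;> ring]
          rw [Finset.sum_sub_distrib, Finset.sum_ite_eq' Finset.univ i,
            Finset.sum_ite_eq' Finset.univ j]
          simp
        rw [hVw]
        simpa using hcoef α
      calc S.mulVec w
          = (V * Matrix.diagonal (RCLike.ofReal ∘ hHerm.eigenvalues) * star V).mulVec w := by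
            conv_lhs => rw [hHerm.spectral_theorem, Unitary.conjStarAlgAut_apply]
        _ = V.mulVec ((Matrix.diagonal (RCLike.ofReal ∘ hHerm.eigenvalues)).mulVec
              ((star V).mulVec (w : Fin n → ℝ))) := by
            rw [← Matrix.mulVec_mulVec, ← Matrix.mulVec_mulVec]
        _ = 0 := by rw [hmid, Matrix.mulVec_zero]
    -- evaluate at k
    have hk := congrFun hSw k
    simp only [Matrix.mulVec, dotProduct, Pi.zero_apply, hw] at hk
    rw [show (∑ l, S k l * ((if l = i then 1 / Real.sqrt (f i) else 0) -
        (if l = j then 1 / Real.sqrt (f j) else 0))) =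
        ∑ l, ((if l = i then S k l / Real.sqrt (f i) else 0) -
        (if l = j then S k l / Real.sqrt (f j) else 0)) from
      Finset.sum_congr rfl fun l _ => by split_ifs <;> ring] at hk
    rw [Finset.sum_sub_distrib, Finset.sum_ite_eq' Finset.univ i,
      Finset.sum_ite_eq' Finset.univ j] at hk
    simp only [Finset.mem_univ, if_true, sub_eq_zero] at hk
    -- hk : S k i / √f i = S k j / √f j
    have hki : S k i / Real.sqrt (f i) = E i k / (Real.sqrt (f k) * f i) := by
      rw [hS]; simp only [Matrix.of_apply]
      rw [hEsym k i, div_div, mul_assoc, hsqsq i]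
    have hkj : S k j / Real.sqrt (f j) = E j k / (Real.sqrt (f k) * f j) := by
      rw [hS]; simp only [Matrix.of_apply]
      rw [hEsym k j, div_div, mul_assoc, hsqsq j]
    rw [hki, hkj] at hk
    have hne : Real.sqrt (f k) ≠ 0 := (hsq k).ne'
    rw [mul_comm (Real.sqrt (f k)) (f i), mul_comm (Real.sqrt (f k)) (f j),
      ← div_div, ← div_div] at hk
    exact (div_left_inj' hne).mp hk
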